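/- Assume max_{j=1,…,p'} |(1/n') Σ_{i=1}^{n'} 𝕫'_{i,j} ξᵢ| ≤ t for some t > 0, that 𝕫' satisfies the RE(s,3) condition with constant κ(s,3) > 0 and |S| ≤ s, and that λ = γt with γ ≥ 4. Then ‖𝕫'(β̂ − β*)‖_{n'} ≤ 4(γ+1)t√s / κ(s,3), and for every 1 ≤ q ≤ 2, |β̂ − β*|_q ≤ 4^{2/q}(γ+1)·t·s^{1/q} / κ(s,3)². -/

import Mathlib

open Finset

private lemma lasso_rpow_combine (C u q : ℝ) (hC : 0 < C) (hu : 0 < u) :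
    (16*C*u) ^ (2-q) * (16*C^2*u) ^ (q-1) = 16 * C ^ q * u := by
  have h0 : (0:ℝ) < 16*C*u := by positivity
  have h1 : (16*C^2*u) = (16*C*u)*C := by ring
  rw [h1, Real.mul_rpow h0.le hC.le, show (16*C*u) ^ (2-q) * ((16*C*u) ^ (q-1) * C ^ (q-1))
    = ((16*C*u) ^ (2-q) * (16*C*u) ^ (q-1)) * C ^ (q-1) by ring,
    ← Real.rpow_add h0, show (2-q)+(q-1) = 1 by ring, Real.rpow_one]
  rw [show (16*C*u) * C ^ (q-1) = 16*u*(C^(1:ℝ) * C^(q-1)) by rw [Real.rpow_one]; ring,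
    ← Real.rpow_add hC, show (1:ℝ)+(q-1) = q by ring]
  ring

private lemma lasso_interp {p' : ℕ} (δ : Fin p' → ℝ) (q : ℝ) (hq1 : 1 ≤ q) (hq2 : q ≤ 2) :
    ∑ j, |δ j| ^ q ≤ (∑ j, |δ j|) ^ (2-q) * (∑ j, (δ j)^2) ^ (q-1) := by
  have habs2 : ∀ j : Fin p', |δ j| ^ (2:ℝ) = (δ j)^2 := fun j => by
    rw [show ((2:ℝ)) = ((2:ℕ):ℝ) by norm_num, Real.rpow_natCast, sq_abs]
  rcases eq_or_lt_of_le hq1 with h1 | h1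
  · rw [← h1]
    norm_num [Real.rpow_one]
  rcases eq_or_lt_of_le hq2 with h2 | h2
  · subst h2
    simp only [habs2]
    norm_num
  have hq0 : (0:ℝ) < q := by linarith
  have h2q : (0:ℝ) < 2 - q := by linarith
  have hq1' : (0:ℝ) < q - 1 := by linarith
  set a : ℝ := (2-q)⁻¹ with ha
  set b : ℝ := (q-1)⁻¹ with hb
  have hconj : Real.HolderConjugate a b := by
    refine Real.holderConjugate_iff.mpr ⟨?_, ?_⟩
    · rw [ha, lt_inv_comm₀ one_pos h2q]
      linarith
    · rw [ha, hb, inv_inv, inv_inv]; ring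
  have key := Real.inner_le_Lp_mul_Lq (Finset.univ) (fun j => |δ j| ^ (2-q))
      (fun j => |δ j| ^ (2*(q-1))) hconj
  have e1 : ∀ j : Fin p', |δ j| ^ (2-q) * |δ j| ^ (2*(q-1)) = |δ j| ^ q := fun j => by
    rw [← Real.rpow_add' (abs_nonneg _) (by intro h; apply hq0.ne'; linarith : (2-q)+(2*(q-1)) ≠ 0)]
    congr 1
    ring
  have e2 : ∀ j : Fin p', (|(|δ j| ^ (2-q))|) ^ a = |δ j| := fun j => by
    rw [abs_of_nonneg (Real.rpow_nonneg (abs_nonneg _) _), ← Real.rpow_mul (abs_nonneg _),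
      mul_inv_cancel₀ h2q.ne', Real.rpow_one]
  have e3 : ∀ j : Fin p', (|(|δ j| ^ (2*(q-1)))|) ^ b = (δ j)^2 := fun j => by
    rw [abs_of_nonneg (Real.rpow_nonneg (abs_nonneg _) _), ← Real.rpow_mul (abs_nonneg _)]
    rw [hb, mul_assoc, mul_inv_cancel₀ hq1'.ne', mul_one, habs2]
  have e4 : 1/a = 2 - q := by rw [ha]; simp
  have e5 : 1/b = q - 1 := by rw [hb]; simp
  simp only [e1, e2, e3, e4, e5] at key
  exact key

/-- The Restricted Eigenvalue condition RE(s, c₀) with constant κ. -/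
def REcondition {n' p' : ℕ} (Zd : Matrix (Fin n') (Fin p') ℝ) (s : ℕ) (c₀ κ : ℝ) : Prop :=
  0 < κ ∧ ∀ J₀ : Finset (Fin p'), J₀.card ≤ s → ∀ δ : Fin p' → ℝ, δ ≠ 0 →
    (∑ j ∈ J₀ᶜ, |δ j|) ≤ c₀ * ∑ j ∈ J₀, |δ j| →
    κ * Real.sqrt n' * Real.sqrt (∑ j, δ j ^ 2) ≤ Real.sqrt (∑ i, (∑ j, Zd i j * δ j) ^ 2)

open scoped Classical in
/-- **Lemma (deterministic lasso bounds).** If max_j |(1/n')Σᵢ 𝕫'_{i,j}ξᵢ| ≤ t, 𝕫' satisfies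
RE(s,3) with constant κ(s,3) > 0, |S| ≤ s and λ = γt with γ ≥ 4, then
‖𝕫'(β̂−β*)‖_{n'} ≤ 4(γ+1)t√s/κ(s,3) and, for every 1 ≤ q ≤ 2,
|β̂−β*|_q ≤ 4^{2/q}(γ+1)·t·s^{1/q}/κ(s,3)². -/
theorem lasso_deterministic_bounds
    {n' p' : ℕ} (hn' : 1 ≤ n') (hp' : 1 ≤ p')
    (Zd : Matrix (Fin n') (Fin p') ℝ) (Y : Fin n' → ℝ)
    (βstar βhat : Fin p' → ℝ)
    (t γ lam : ℝ) (ht : 0 < t) (hγ : 4 ≤ γ) (hlam : lam = γ * t)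
    (s : ℕ) (κ : ℝ)
    (hS : (Finset.univ.filter (fun j => βstar j ≠ 0)).card ≤ s)
    (hRE : REcondition Zd s 3 κ)
    (hmin : ∀ β : Fin p' → ℝ,
      (∑ i, (Y i - ∑ j, Zd i j * βhat j) ^ 2) / (n' : ℝ) + lam * ∑ j, |βhat j|
        ≤ (∑ i, (Y i - ∑ j, Zd i j * β j) ^ 2) / (n' : ℝ) + lam * ∑ j, |β j|)
    (hmax : ∀ j : Fin p',
      |(∑ i, Zd i j * (Y i - ∑ j', Zd i j' * βstar j')) / (n' : ℝ)| ≤ t) :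
    Real.sqrt (∑ i, (∑ j, Zd i j * (βhat j - βstar j)) ^ 2) / Real.sqrt n'
        ≤ 4 * (γ + 1) * t * Real.sqrt s / κ
    ∧ ∀ q : ℝ, 1 ≤ q → q ≤ 2 →
        (∑ j, |βhat j - βstar j| ^ q) ^ (1 / q)
          ≤ (4 : ℝ) ^ (2 / q) * (γ + 1) * t * (s : ℝ) ^ (1 / q) / κ ^ 2 := by
  -- setup
  obtain ⟨hκ, hREm⟩ := hRE
  have hn : (0:ℝ) < (n' : ℝ) := by exact_mod_cast Nat.lt_of_lt_of_le Nat.zero_lt_one hn'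
  obtain ⟨δ, hδdef⟩ : ∃ δ : Fin p' → ℝ, δ = fun j => βhat j - βstar j := ⟨_, rfl⟩
  have hδeq : ∀ j, βhat j - βstar j = δ j := fun j => by rw [hδdef]
  obtain ⟨S, hSdef⟩ : ∃ S : Finset (Fin p'),
      S = Finset.univ.filter (fun j => βstar j ≠ 0) := ⟨_, rfl⟩
  rw [← hSdef] at hS
  have hScard : S.card ≤ s := hS
  obtain ⟨D1, hD1def⟩ : ∃ D1 : ℝ, D1 = ∑ j ∈ S, |δ j| := ⟨_, rfl⟩
  obtain ⟨D2, hD2def⟩ : ∃ D2 : ℝ, D2 = ∑ j ∈ Sᶜ, |δ j| := ⟨_, rfl⟩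
  have hsplit : ∑ j, |δ j| = D1 + D2 := by
    rw [hD1def, hD2def]; exact (Finset.sum_add_sum_compl S _).symm
  have hD1nn : 0 ≤ D1 := hD1def ▸ Finset.sum_nonneg fun j _ => abs_nonneg _
  have hD2nn : 0 ≤ D2 := hD2def ▸ Finset.sum_nonneg fun j _ => abs_nonneg _
  have hβzero : ∀ j ∈ Sᶜ, βstar j = 0 := by
    intro j hj
    have hj' := Finset.mem_compl.mp hj
    rw [hSdef] at hj'
    by_contra h
    exact hj' (Finset.mem_filter.mpr ⟨Finset.mem_univ _, h⟩)

  have hexp : ∀ i, Y i - ∑ j, Zd i j * βhat j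
      = (Y i - ∑ j, Zd i j * βstar j) - ∑ j, Zd i j * δ j := by
    intro i
    simp only [hδdef, mul_sub, Finset.sum_sub_distrib]
    ring
  have hswap : ∑ i, (Y i - ∑ j, Zd i j * βstar j) * (∑ j, Zd i j * δ j)
      = ∑ j, δ j * (∑ i, Zd i j * (Y i - ∑ j', Zd i j' * βstar j')) := by
    simp_rw [Finset.mul_sum]
    rw [Finset.sum_comm]
    exact Finset.sum_congr rfl fun j _ => Finset.sum_congr rfl fun i _ => by ring
  have hsq : ∑ i, (Y i - ∑ j, Zd i j * βhat j)^2
      = (∑ i, (Y i - ∑ j, Zd i j * βstar j)^2)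
        - 2*(∑ j, δ j * (∑ i, Zd i j * (Y i - ∑ j', Zd i j' * βstar j')))
        + ∑ i, (∑ j, Zd i j * δ j)^2 := by
    rw [← hswap, Finset.mul_sum, ← Finset.sum_sub_distrib, ← Finset.sum_add_distrib]
    exact Finset.sum_congr rfl fun i _ => by rw [hexp i]; ring
  have hm := hmin βstar
  rw [hsq] at hm
  -- basic inequality
  have hXdiv : (∑ j, δ j * (∑ i, Zd i j * (Y i - ∑ j', Zd i j' * βstar j'))) / (n' : ℝ)
      = ∑ j, δ j * ((∑ i, Zd i j * (Y i - ∑ j', Zd i j' * βstar j')) / (n' : ℝ)) := by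
    rw [Finset.sum_div]
    exact Finset.sum_congr rfl fun j _ => mul_div_assoc _ _ _
  have habsX : |∑ j, δ j * ((∑ i, Zd i j * (Y i - ∑ j', Zd i j' * βstar j')) / (n' : ℝ))|
      ≤ t * ∑ j, |δ j| := by
    calc |∑ j, δ j * ((∑ i, Zd i j * (Y i - ∑ j', Zd i j' * βstar j')) / (n' : ℝ))|
        ≤ ∑ j, |δ j * ((∑ i, Zd i j * (Y i - ∑ j', Zd i j' * βstar j')) / (n' : ℝ))| :=
          Finset.abs_sum_le_sum_abs _ _
      _ ≤ ∑ j, |δ j| * t := by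
          apply Finset.sum_le_sum
          intro j _
          rw [abs_mul]
          exact mul_le_mul_of_nonneg_left (hmax j) (abs_nonneg _)
      _ = t * ∑ j, |δ j| := by rw [← Finset.sum_mul]; ring
  have hbasic : (∑ i, (∑ j, Zd i j * δ j)^2) / (n' : ℝ)
      ≤ 2*(t * ∑ j, |δ j|) + lam * ((∑ j, |βstar j|) - ∑ j, |βhat j|) := by
    have hdiv : ((∑ i, (Y i - ∑ j, Zd i j * βstar j)^2)
        - 2*(∑ j, δ j * (∑ i, Zd i j * (Y i - ∑ j', Zd i j' * βstar j')))
        + ∑ i, (∑ j, Zd i j * δ j)^2) / (n' : ℝ)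
        = (∑ i, (Y i - ∑ j, Zd i j * βstar j)^2)/(n' : ℝ)
          - 2*((∑ j, δ j * (∑ i, Zd i j * (Y i - ∑ j', Zd i j' * βstar j')))/(n' : ℝ))
          + (∑ i, (∑ j, Zd i j * δ j)^2)/(n' : ℝ) := by ring
    rw [hdiv] at hm
    rw [hXdiv] at hm
    have h2 : 2*(∑ j, δ j * ((∑ i, Zd i j * (Y i - ∑ j', Zd i j' * βstar j')) / (n' : ℝ)))
        ≤ 2*(t * ∑ j, |δ j|) := by
      have := le_trans (le_abs_self _) habsX
      linarith
    linarith
  -- ℓ¹ comparison of βstar and βhat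
  have hlampos : 0 < lam := by rw [hlam]; nlinarith
  have hl1 : (∑ j, |βstar j|) - ∑ j, |βhat j| ≤ D1 - D2 := by
    have e1 : ∑ j, |βstar j| = ∑ j ∈ S, |βstar j| := by
      rw [← Finset.sum_add_sum_compl S fun j => |βstar j|]
      have : ∑ j ∈ Sᶜ, |βstar j| = 0 :=
        Finset.sum_eq_zero fun j hj => by rw [hβzero j hj, abs_zero]
      rw [this, add_zero]
    have e2 : ∑ j, |βhat j| = (∑ j ∈ S, |βhat j|) + D2 := by
      rw [← Finset.sum_add_sum_compl S fun j => |βhat j|, hD2def]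
      congr 1
      exact Finset.sum_congr rfl fun j hj => by
        rw [← hδeq j, hβzero j hj, sub_zero]
    have e3 : (∑ j ∈ S, |βstar j|) - ∑ j ∈ S, |βhat j| ≤ D1 := by
      rw [hD1def, ← Finset.sum_sub_distrib]
      apply Finset.sum_le_sum
      intro j _
      calc |βstar j| - |βhat j| ≤ |βstar j - βhat j| := abs_sub_abs_le_abs_sub _ _
        _ = |δ j| := by rw [← hδeq j, abs_sub_comm]
    linarith
  -- key inequality
  have hE0 : 0 ≤ (∑ i, (∑ j, Zd i j * δ j)^2) / (n' : ℝ) :=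
    div_nonneg (Finset.sum_nonneg fun i _ => sq_nonneg _) hn.le
  have hkey : (∑ i, (∑ j, Zd i j * δ j)^2) / (n' : ℝ) + (γ-2)*t*D2 ≤ (γ+2)*t*D1 := by
    have h1 : lam * ((∑ j, |βstar j|) - ∑ j, |βhat j|) ≤ lam * (D1 - D2) :=
      mul_le_mul_of_nonneg_left hl1 hlampos.le
    rw [hsplit] at hbasic
    rw [hlam] at h1 hbasic
    set E := (∑ i, (∑ j, Zd i j * δ j)^2) / (n' : ℝ) with hEdef
    nlinarith [hbasic, h1]
  have hD2le3 : D2 ≤ 3*D1 := by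
    have h3 : (γ-2)*t*D2 ≤ (γ+2)*t*D1 := by linarith only [hE0, hkey]
    have htD1 : 0 ≤ t*D1 := mul_nonneg ht.le hD1nn
    have h4 : (γ+2)*(t*D1) ≤ (3*(γ-2))*(t*D1) :=
      mul_le_mul_of_nonneg_right (by linarith only [hγ]) htD1
    have hpos : 0 < (γ-2)*t := mul_pos (by linarith only [hγ]) ht
    have h6 : (γ-2)*t*D2 ≤ (γ-2)*t*(3*D1) := by nlinarith only [h3, h4]
    exact le_of_mul_le_mul_left h6 hpos
  clear hm hsq hswap hexp hXdiv habsX hbasic hl1 hmin hmax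
  -- case split on δ = 0
  by_cases hδ0 : δ = 0
  · constructor
    · simp only [hδeq, hδ0, Pi.zero_apply, mul_zero, Finset.sum_const_zero,
        ne_eq, OfNat.ofNat_ne_zero, not_false_eq_true, zero_pow, Real.sqrt_zero, zero_div]
      apply div_nonneg _ hκ.le
      have h1 : (0:ℝ) ≤ 4*(γ+1)*t := mul_nonneg (by linarith only [hγ]) ht.le
      exact mul_nonneg h1 (Real.sqrt_nonneg _)
    · intro q hq1 hq2
      have hq0 : (0:ℝ) < q := by linarith
      simp only [hδeq, hδ0, Pi.zero_apply, abs_zero]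
      rw [Real.zero_rpow hq0.ne', Finset.sum_const_zero,
        Real.zero_rpow (one_div_ne_zero hq0.ne')]
      apply div_nonneg _ (sq_nonneg κ)
      exact mul_nonneg (mul_nonneg (mul_nonneg (Real.rpow_nonneg (by norm_num) _)
        (by linarith)) ht.le) (Real.rpow_nonneg (Nat.cast_nonneg s) _)
  -- main case : δ ≠ 0
  have hD2le3' : ∑ j ∈ Sᶜ, |δ j| ≤ 3 * ∑ j ∈ S, |δ j| := by
    rw [← hD1def, ← hD2def]; exact hD2le3
  have hREappl := hREm S hScard δ hδ0 hD2le3'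
  have hsumsq_pos : 0 < ∑ j, (δ j)^2 := by
    obtain ⟨j, hj⟩ := Function.ne_iff.mp hδ0
    exact Finset.sum_pos' (fun i _ => sq_nonneg _) ⟨j, Finset.mem_univ _, by rw [← sq_abs]; exact pow_pos (abs_pos.mpr hj) 2⟩
  obtain ⟨L2, hL2def⟩ : ∃ L2 : ℝ, L2 = Real.sqrt (∑ j, (δ j)^2) := ⟨_, rfl⟩
  obtain ⟨W, hWdef⟩ : ∃ W : ℝ, W = Real.sqrt (∑ i, (∑ j, Zd i j * δ j)^2) := ⟨_, rfl⟩
  rw [← hL2def, ← hWdef] at hREappl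
  have hL2pos : 0 < L2 := hL2def ▸ Real.sqrt_pos.mpr hsumsq_pos
  have hL2sq : L2^2 = ∑ j, (δ j)^2 := by rw [hL2def]; exact Real.sq_sqrt hsumsq_pos.le
  have hsqn_pos : 0 < Real.sqrt (n' : ℝ) := Real.sqrt_pos.mpr hn
  have hWnn : 0 ≤ W := hWdef ▸ Real.sqrt_nonneg _
  have hW2 : W^2 = ∑ i, (∑ j, Zd i j * δ j)^2 := by
    rw [hWdef]; exact Real.sq_sqrt (Finset.sum_nonneg fun i _ => sq_nonneg _)
  obtain ⟨A, hAdef⟩ : ∃ A : ℝ, A = W / Real.sqrt (n' : ℝ) := ⟨_, rfl⟩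
  have hA2 : A^2 = (∑ i, (∑ j, Zd i j * δ j)^2) / (n' : ℝ) := by
    rw [hAdef, div_pow, hW2, Real.sq_sqrt hn.le]
  have hκA : κ * L2 ≤ A := by
    rw [hAdef, le_div_iff₀ hsqn_pos]
    calc κ * L2 * Real.sqrt (n' : ℝ) = κ * Real.sqrt (n' : ℝ) * L2 := by ring
      _ ≤ W := hREappl
  have hApos : 0 < A := lt_of_lt_of_le (mul_pos hκ hL2pos) hκA
  -- Cauchy-Schwarz : D1 ≤ √s * L2
  have hsnn : (0:ℝ) ≤ (s:ℝ) := Nat.cast_nonneg s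
  have hCS : D1 ≤ Real.sqrt s * L2 := by
    have h1 : D1^2 ≤ (S.card : ℝ) * ∑ j ∈ S, |δ j|^2 := by
      rw [hD1def]
      exact_mod_cast sq_sum_le_card_mul_sum_sq (s := S) (f := fun j => |δ j|)
    have h2 : ∑ j ∈ S, |δ j|^2 ≤ ∑ j, (δ j)^2 := by
      simp only [sq_abs]
      exact Finset.sum_le_sum_of_subset_of_nonneg (Finset.subset_univ S)
        fun j _ _ => sq_nonneg _
    have h3 : D1^2 ≤ (s:ℝ) * ∑ j, (δ j)^2 := by
      calc D1^2 ≤ (S.card : ℝ) * ∑ j ∈ S, |δ j|^2 := h1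
        _ ≤ (s:ℝ) * ∑ j, (δ j)^2 := by
            apply mul_le_mul (by exact_mod_cast hScard) h2
              (Finset.sum_nonneg fun j _ => sq_nonneg _) hsnn
    have h4 : (Real.sqrt s * L2)^2 = (s:ℝ) * ∑ j, (δ j)^2 := by
      rw [mul_pow, Real.sq_sqrt hsnn, hL2sq]
    have h5 := Real.sqrt_le_sqrt (h4 ▸ h3)
    rwa [Real.sqrt_sq hD1nn, Real.sqrt_sq (by positivity)] at h5
  have hED1 : (∑ i, (∑ j, Zd i j * δ j)^2) / (n' : ℝ) ≤ (γ+2)*t*D1 := by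
    have h' : 0 ≤ (γ-2)*t*D2 := by
      apply mul_nonneg (mul_nonneg (by linarith only [hγ]) ht.le) hD2nn
    linarith only [hkey, h']
  have hAbound : A ≤ (γ+2)*t*Real.sqrt s/κ := by
    have hL2A : L2 ≤ A/κ := by
      rw [le_div_iff₀ hκ]
      calc L2 * κ = κ * L2 := by ring
        _ ≤ A := hκA
    have hgt : (0:ℝ) ≤ (γ+2)*t := mul_nonneg (by linarith only [hγ]) ht.le
    have h1 : A*A ≤ ((γ+2)*t*Real.sqrt s/κ) * A := by
      calc A*A = A^2 := (sq A).symm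
        _ ≤ (γ+2)*t*D1 := hA2 ▸ hED1
        _ ≤ (γ+2)*t*(Real.sqrt s * L2) := by
            exact mul_le_mul_of_nonneg_left hCS hgt
        _ ≤ (γ+2)*t*(Real.sqrt s * (A/κ)) := by
            apply mul_le_mul_of_nonneg_left _ hgt
            exact mul_le_mul_of_nonneg_left hL2A (Real.sqrt_nonneg _)
        _ = ((γ+2)*t*Real.sqrt s/κ) * A := by field_simp
    exact le_of_mul_le_mul_right h1 hApos
  constructor
  · -- first conclusion
    simp only [hδeq]
    rw [← hWdef, ← hAdef]
    calc A ≤ (γ+2)*t*Real.sqrt s/κ := hAbound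
      _ ≤ 4*(γ+1)*t*Real.sqrt s/κ := by
          rw [div_le_div_iff_of_pos_right hκ]
          have h9 : (0:ℝ) ≤ (3*γ+2)*t*Real.sqrt s :=
            mul_nonneg (mul_nonneg (by linarith only [hγ]) ht.le) (Real.sqrt_nonneg _)
          nlinarith only [h9]
  -- second conclusion
  -- s ≥ 1
  have hsumabs_pos : 0 < ∑ j, |δ j| := by
    obtain ⟨j, hj⟩ := Function.ne_iff.mp hδ0
    exact Finset.sum_pos' (fun i _ => abs_nonneg _) ⟨j, Finset.mem_univ _, abs_pos.mpr hj⟩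
  have hD1pos : 0 < D1 := by
    rw [hsplit] at hsumabs_pos
    linarith only [hsumabs_pos, hD2le3]
  have hSne : S.Nonempty := by
    by_contra h
    rw [Finset.not_nonempty_iff_eq_empty] at h
    rw [hD1def, h, Finset.sum_empty] at hD1pos
    exact lt_irrefl 0 hD1pos
  have hspos : (0:ℝ) < (s:ℝ) := by
    have := le_trans (Finset.card_pos.mpr hSne) hScard
    exact_mod_cast Nat.lt_of_lt_of_le Nat.zero_lt_one this
  have hss : Real.sqrt s * Real.sqrt s = (s:ℝ) := Real.mul_self_sqrt hsnn
  obtain ⟨C, hCdef⟩ : ∃ C : ℝ, C = (γ+1)*t/κ^2 := ⟨_, rfl⟩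
  have hCpos : 0 < C := by
    rw [hCdef]
    exact div_pos (mul_pos (by linarith only [hγ]) ht) (by positivity)
  have hκ2 : (0:ℝ) < κ^2 := by positivity
  have hL2X : κ^2 * L2 ≤ (γ+2)*t*Real.sqrt s := by
    have h1 : κ*(κ*L2) ≤ κ*A := mul_le_mul_of_nonneg_left hκA hκ.le
    have h2 : κ*A ≤ κ*((γ+2)*t*Real.sqrt s/κ) := mul_le_mul_of_nonneg_left hAbound hκ.le
    have h3 : κ*((γ+2)*t*Real.sqrt s/κ) = (γ+2)*t*Real.sqrt s := by field_simp
    nlinarith only [h1, h2, h3]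
  have hsum1 : ∑ j, |δ j| ≤ 16*C*(s:ℝ) := by
    have h4 : ∑ j, |δ j| ≤ 4*(Real.sqrt s*L2) := by
      rw [hsplit]
      linarith only [hCS, hD2le3]
    have h5 : κ^2*(4*(Real.sqrt s*L2)) ≤ 4*(γ+2)*t*(s:ℝ) := by
      have h5a := mul_le_mul_of_nonneg_left hL2X
        (mul_nonneg (by norm_num) (Real.sqrt_nonneg _) : (0:ℝ) ≤ 4*Real.sqrt s)
      have hss' : 4*(γ+2)*t*(Real.sqrt s*Real.sqrt s) = 4*(γ+2)*t*(s:ℝ) := by rw [hss]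
      nlinarith only [h5a, hss']
    have h7 : 4*(γ+2)*t*(s:ℝ) ≤ κ^2*(16*C*(s:ℝ)) := by
      have he : κ^2*(16*C*(s:ℝ)) = 16*(γ+1)*t*(s:ℝ) := by
        rw [hCdef, show κ^2*(16*((γ+1)*t/κ^2)*(s:ℝ)) = 16*(γ+1)*t*(s:ℝ)*(κ^2/κ^2) by ring,
          div_self (ne_of_gt hκ2), mul_one]
      rw [he]
      have hmon : (0:ℝ) ≤ (12*γ+8)*(t*(s:ℝ)) :=
        mul_nonneg (by linarith only [hγ]) (mul_nonneg ht.le hspos.le)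
      nlinarith only [hmon]
    have h8 := mul_le_mul_of_nonneg_left h4 (sq_nonneg κ)
    have h9 : κ^2 * ∑ j, |δ j| ≤ κ^2*(16*C*(s:ℝ)) := by linarith only [h8, h5, h7]
    exact le_of_mul_le_mul_left h9 hκ2
  have hsum2 : ∑ j, (δ j)^2 ≤ 16*C^2*(s:ℝ) := by
    have hXnn : (0:ℝ) ≤ (γ+2)*t*Real.sqrt s := by
      apply mul_nonneg (mul_nonneg (by linarith only [hγ]) ht.le) (Real.sqrt_nonneg _)
    have h1 : (κ^2*L2)^2 ≤ ((γ+2)*t*Real.sqrt s)^2 :=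
      pow_le_pow_left₀ (mul_nonneg (sq_nonneg κ) hL2pos.le) hL2X 2
    have e1 : (κ^2*L2)^2 = κ^4 * ∑ j, (δ j)^2 := by
      rw [mul_pow, hL2sq]; ring
    have e2 : ((γ+2)*t*Real.sqrt s)^2 = (γ+2)^2*t^2*(s:ℝ) := by
      rw [mul_pow, mul_pow, Real.sq_sqrt hsnn]
    have e3 : (γ+2)^2*t^2*(s:ℝ) ≤ κ^4*(16*C^2*(s:ℝ)) := by
      have he : κ^4*(16*C^2*(s:ℝ)) = 16*(γ+1)^2*t^2*(s:ℝ) := by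
        rw [hCdef, show κ^4*(16*((γ+1)*t/κ^2)^2*(s:ℝ)) = 16*(γ+1)^2*t^2*(s:ℝ)*(κ^4/κ^4) by ring,
          div_self (pow_ne_zero 4 (ne_of_gt hκ)), mul_one]
      rw [he]
      have hg2 : (0:ℝ) ≤ 15*γ^2+28*γ+12 := by nlinarith only [hγ, sq_nonneg γ]
      have hmon2 : (0:ℝ) ≤ (15*γ^2+28*γ+12)*(t^2*(s:ℝ)) :=
        mul_nonneg hg2 (mul_nonneg (sq_nonneg t) hspos.le)
      nlinarith only [hmon2]
    have h2 : κ^4 * ∑ j, (δ j)^2 ≤ κ^4*(16*C^2*(s:ℝ)) := by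
      rw [← e1]; exact le_trans h1 (e2 ▸ e3)
    exact le_of_mul_le_mul_left h2 (by positivity)
  intro q hq1 hq2
  have hq0 : (0:ℝ) < q := by linarith
  simp only [hδeq]
  have hstep : ∑ j, |δ j|^q ≤ 16 * C^q * (s:ℝ) := by
    calc ∑ j, |δ j|^q ≤ (∑ j, |δ j|) ^ (2-q) * (∑ j, (δ j)^2) ^ (q-1) :=
          lasso_interp δ q hq1 hq2
      _ ≤ (16*C*(s:ℝ)) ^ (2-q) * (16*C^2*(s:ℝ)) ^ (q-1) := by
          apply mul_le_mul
          · exact Real.rpow_le_rpow (Finset.sum_nonneg fun j _ => abs_nonneg _) hsum1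
              (by linarith)
          · exact Real.rpow_le_rpow (Finset.sum_nonneg fun j _ => sq_nonneg _) hsum2
              (by linarith)
          · exact Real.rpow_nonneg (Finset.sum_nonneg fun j _ => sq_nonneg _) _
          · exact Real.rpow_nonneg (by positivity) _
      _ = 16 * C^q * (s:ℝ) := lasso_rpow_combine C (s:ℝ) q hCpos hspos
  calc (∑ j, |δ j|^q) ^ (1/q) ≤ (16*C^q*(s:ℝ)) ^ (1/q) :=
        Real.rpow_le_rpow (Finset.sum_nonneg fun j _ =>
          Real.rpow_nonneg (abs_nonneg _) _) hstep (by positivity)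
    _ = (16:ℝ)^(1/q) * (C^q)^(1/q) * (s:ℝ)^(1/q) := by
        rw [Real.mul_rpow (by positivity) hsnn,
          Real.mul_rpow (by norm_num) (Real.rpow_nonneg hCpos.le _)]
    _ = (16:ℝ)^(1/q) * C * (s:ℝ)^(1/q) := by
        rw [← Real.rpow_mul hCpos.le, mul_one_div_cancel hq0.ne', Real.rpow_one]
    _ = (4:ℝ)^(2/q) * (γ+1) * t * (s:ℝ)^(1/q) / κ^2 := by
        have h16 : (16:ℝ)^(1/q) = (4:ℝ)^(2/q) := by
          rw [show (16:ℝ) = (4:ℝ)^((2:ℕ):ℝ) by rw [Real.rpow_natCast]; norm_num,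
            ← Real.rpow_mul (by norm_num : (0:ℝ) ≤ 4)]
          congr 1
          push_cast
          ring
        rw [h16, hCdef]
        ring
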